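/- Let A be a preadditive category, let x be an object of A, and suppose there are finitely many objects y_1, …, y_m of A and morphisms s_j : x → y_j and r_j : y_j → x (1 ≤ j ≤ m) with ∑_{j=1}^m r_j ∘ s_j = id_x. Then the m × m matrix q with entries q_{ij} = s_i ∘ r_j : y_j → y_i is an idempotent endomorphism of the object (y_1, …, y_m) of Mat(A), and the image of x under the canonical embedding A → Kar(Mat(A)) is isomorphic to the object ((y_1, …, y_m), q) of Kar(Mat(A)); in particular x is a retract of (y_1, …, y_m) in Mat(A). -/

import Mathlib

open CategoryTheory CategoryTheory.Idempotents

/-- Let `A` be a preadditive category, `x` an object of `A`, and suppose there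
are objects `y 0, …, y (m-1)` and morphisms `s j : x ⟶ y j`, `r j : y j ⟶ x` with
`∑ j, s j ≫ r j = 𝟙 x`. Then the matrix `q` with entries `q i j = r i ≫ s j : y i ⟶ y j`
is an idempotent endomorphism of the object `(y 0, …, y (m-1))` of `Mat_ A`, the image of `x`
under the canonical embedding `A ⥤ Kar(Mat_ A)` is isomorphic to the object
`((y 0, …, y (m-1)), q)` of `Kar(Mat_ A)`, and in particular `x` is a retract of
`(y 0, …, y (m-1))` in `Mat_ A`. -/
theorem domination_gives_retract_in_completion
    {A : Type*} [Category A] [Preadditive A]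
    (x : A) (m : ℕ) (y : Fin m → A)
    (s : ∀ j, x ⟶ y j) (r : ∀ j, y j ⟶ x)
    (h : ∑ j, s j ≫ r j = 𝟙 x) :
    ∃ q : Mat_.mk (Fin m) y ⟶ Mat_.mk (Fin m) y,
      (∀ i j, q i j = r i ≫ s j) ∧
      ∃ hq : q ≫ q = q,
        Nonempty (((Mat_.embedding A ⋙ toKaroubi (Mat_ A)).obj x) ≅
            Karoubi.mk (Mat_.mk (Fin m) y) q hq) ∧
        ∃ (i : (Mat_.embedding A).obj x ⟶ Mat_.mk (Fin m) y)
          (p : Mat_.mk (Fin m) y ⟶ (Mat_.embedding A).obj x),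
          i ≫ p = 𝟙 ((Mat_.embedding A).obj x) := by
  let q : Mat_.mk (Fin m) y ⟶ Mat_.mk (Fin m) y := fun i j => r i ≫ s j
  have hq : q ≫ q = q := by
    ext i k
    simp only [Mat_.comp_apply, q]
    calc ∑ j, (r i ≫ s j) ≫ r j ≫ s k = r i ≫ (∑ j, s j ≫ r j) ≫ s k := by
          simp [Preadditive.sum_comp, Preadditive.comp_sum]
      _ = r i ≫ s k := by rw [h]; simp
  refine ⟨q, fun _ _ => rfl, hq, ?_, ?_⟩
  · -- the isomorphism in the Karoubi envelope
    let i : (Mat_.embedding A).obj x ⟶ Mat_.mk (Fin m) y := fun _ j => s j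
    let p : Mat_.mk (Fin m) y ⟶ (Mat_.embedding A).obj x := fun j _ => r j
    have hip : i ≫ p = 𝟙 ((Mat_.embedding A).obj x) := by
      ext ⟨⟩ ⟨⟩
      show ∑ j, s j ≫ r j = _
      rw [h]
      exact (Mat_.id_apply_self (C := A) ((Mat_.embedding A).obj x) PUnit.unit).symm
    have hiq : i ≫ q = i := by
      ext ⟨⟩ k
      simp only [Mat_.comp_apply, i, q]
      calc ∑ j, s j ≫ r j ≫ s k = (∑ j, s j ≫ r j) ≫ s k := by
            simp [Preadditive.sum_comp]
        _ = s k := by rw [h]; simp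
    have hqp : q ≫ p = p := by
      ext j ⟨⟩
      simp only [Mat_.comp_apply, p, q]
      calc ∑ k, (r j ≫ s k) ≫ r k = r j ≫ ∑ k, s k ≫ r k := by
            simp [Preadditive.comp_sum]
        _ = r j := by rw [h]; simp
    have hpi : p ≫ i = q := by
      ext j k
      show ∑ _ : PUnit, r j ≫ s k = r j ≫ s k
      simp
    refine ⟨⟨⟨i, ?_⟩, ⟨p, ?_⟩, ?_, ?_⟩⟩
    · show 𝟙 _ ≫ i ≫ q = i
      rw [hiq, Category.id_comp]
    · show q ≫ p ≫ 𝟙 _ = p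
      rw [Category.comp_id, hqp]
    · apply Karoubi.hom_ext_iff.mpr
      show i ≫ p = 𝟙 _
      exact hip
    · apply Karoubi.hom_ext_iff.mpr
      show p ≫ i = q
      exact hpi
  · refine ⟨fun _ j => s j, fun j _ => r j, ?_⟩
    ext ⟨⟩ ⟨⟩
    show ∑ j, s j ≫ r j = _
    rw [h]
    exact (Mat_.id_apply_self (C := A) ((Mat_.embedding A).obj x) PUnit.unit).symm
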